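/- arXiv:1206.2574 — 4 statements merged into one kernel-verified Lean document; each statement's English description precedes it below -/
import Mathlib

section
/- For any Euclidean triangle with side lengths a, b, c > 0, the Euclidean area A satisfies A < (ab + bc + ca)/6. -/
/-- Heron's formula: the Euclidean area of a triangle with side lengths `a b c`. -/
noncomputable def heronArea (a b c : ℝ) : ℝ :=
  Real.sqrt ((a + b + c) * (a + b - c) * (b + c - a) * (a + c - b)) / 4

/-- For any Euclidean triangle with side lengths `a, b, c > 0`, the Euclidean area `A`
satisfies `A < (ab + bc + ca)/6`. -/
theorem heronArea_lt_simplicialArea_div_six (a b c : ℝ)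
    (ha : 0 < a) (hb : 0 < b) (hc : 0 < c)
    (habc : a < b + c) (hbca : b < a + c) (hcab : c < a + b) :
    heronArea a b c < (a * b + b * c + c * a) / 6 := by
  unfold heronArea
  have h : Real.sqrt ((a + b + c) * (a + b - c) * (b + c - a) * (a + c - b))
      < 2 * (a * b + b * c + c * a) / 3 := by
    rw [Real.sqrt_lt' (by positivity)]
    nlinarith [sq_nonneg (a - b), sq_nonneg (b - c), sq_nonneg (a - c),
      sq_nonneg (a + b - c), sq_nonneg (b + c - a), sq_nonneg (a + c - b),
      mul_pos ha hb, mul_pos hb hc, mul_pos ha hc,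
      mul_pos (mul_pos ha hb) hc,
      mul_pos (sub_pos.2 habc) (sub_pos.2 hbca),
      mul_pos (sub_pos.2 hbca) (sub_pos.2 hcab),
      mul_pos (sub_pos.2 habc) (sub_pos.2 hcab)]
  linarith
end

section
/- For a single triangle with positive edge lengths l_i, l_j, l_k and nonnegative image lengths L_i, L_j, L_k, with stretch factors σ_i = L_i/l_i etc., the simplicial energy (1/2)[(σ_i² + σ_j²)l_i l_j + (σ_j² + σ_k²)l_j l_k + (σ_k² + σ_i²)l_k l_i] is greater than or equal to the simplicial area L_i L_j + L_j L_k + L_k L_i, with equality if and only if σ_i = σ_j = σ_k. -/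
/-- For a single triangle with positive edge lengths `lᵢ, lⱼ, lₖ` and nonnegative image
lengths `Lᵢ, Lⱼ, Lₖ`, with stretch factors `σᵢ = Lᵢ/lᵢ` etc., the simplicial energy is at
least the simplicial area, with equality iff `σᵢ = σⱼ = σₖ`. -/
theorem simplicialEnergy_ge_simplicialArea_triangle
    (li lj lk Li Lj Lk : ℝ)
    (hli : 0 < li) (hlj : 0 < lj) (hlk : 0 < lk)
    (hLi : 0 ≤ Li) (hLj : 0 ≤ Lj) (hLk : 0 ≤ Lk) :
    (1 / 2) * (((Li / li) ^ 2 + (Lj / lj) ^ 2) * li * lj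
        + ((Lj / lj) ^ 2 + (Lk / lk) ^ 2) * lj * lk
        + ((Lk / lk) ^ 2 + (Li / li) ^ 2) * lk * li)
      ≥ Li * Lj + Lj * Lk + Lk * Li ∧
    ((1 / 2) * (((Li / li) ^ 2 + (Lj / lj) ^ 2) * li * lj
        + ((Lj / lj) ^ 2 + (Lk / lk) ^ 2) * lj * lk
        + ((Lk / lk) ^ 2 + (Li / li) ^ 2) * lk * li)
      = Li * Lj + Lj * Lk + Lk * Li ↔ Li / li = Lj / lj ∧ Lj / lj = Lk / lk) := by
  have hi : Li = (Li / li) * li := (div_mul_cancel₀ _ hli.ne').symm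
  have hj : Lj = (Lj / lj) * lj := (div_mul_cancel₀ _ hlj.ne').symm
  have hk : Lk = (Lk / lk) * lk := (div_mul_cancel₀ _ hlk.ne').symm
  set a := Li / li with ha
  set b := Lj / lj with hb
  set c := Lk / lk with hc
  rw [hi, hj, hk]
  have key : (1 / 2) * ((a ^ 2 + b ^ 2) * li * lj + (b ^ 2 + c ^ 2) * lj * lk
      + (c ^ 2 + a ^ 2) * lk * li)
      - (a * li * (b * lj) + b * lj * (c * lk) + c * lk * (a * li))
      = (1 / 2) * (li * lj * (a - b) ^ 2 + lj * lk * (b - c) ^ 2 + lk * li * (c - a) ^ 2) := by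
    ring
  have h1 : 0 ≤ li * lj * (a - b) ^ 2 := by positivity
  have h2 : 0 ≤ lj * lk * (b - c) ^ 2 := by positivity
  have h3 : 0 ≤ lk * li * (c - a) ^ 2 := by positivity
  constructor
  · linarith [key, h1, h2, h3]
  constructor
  · intro h
    have hz : li * lj * (a - b) ^ 2 + lj * lk * (b - c) ^ 2 + lk * li * (c - a) ^ 2 = 0 := by
      linarith [key, h]
    have e1 : li * lj * (a - b) ^ 2 = 0 := by linarith
    have e2 : lj * lk * (b - c) ^ 2 = 0 := by linarith
    constructor
    · have : (a - b) ^ 2 = 0 := by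
        rcases mul_eq_zero.mp e1 with h' | h'
        · exact absurd h' (by positivity)
        · exact h'
      have := pow_eq_zero_iff (n := 2) (by norm_num) |>.mp this
      linarith
    · have : (b - c) ^ 2 = 0 := by
        rcases mul_eq_zero.mp e2 with h' | h'
        · exact absurd h' (by positivity)
        · exact h'
      have := pow_eq_zero_iff (n := 2) (by norm_num) |>.mp this
      linarith
  · rintro ⟨hab, hbc⟩
    have z1 : li * lj * (a - b) ^ 2 = 0 := by rw [hab]; ring
    have z2 : lj * lk * (b - c) ^ 2 = 0 := by rw [hbc]; ring
    have z3 : lk * li * (c - a) ^ 2 = 0 := by rw [hab, hbc]; ring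
    linarith [key, z1, z2, z3]
end

section
/- (Boundedness of minimizing sequences) Let τ be a triangulation of a closed surface and for each n let (L_i^n)_i be nonnegative reals indexed by edges, satisfying the triangle inequality in each triangle, such that the sequence A_n = Σ_{triangles} (L_i^n L_j^n + L_j^n L_k^n + L_k^n L_i^n) is bounded. Then for every edge e_0 the sequence (L_0^n) is bounded. -/
/-- Boundedness of area-minimizing sequences: if nonnegative edge lengths `Lⁿ` indexed by
the edges of a triangulation satisfy the triangle inequality in each triangle and the
simplicial areas `Aₙ = Σ_T (LᵢLⱼ + LⱼLₖ + LₖLᵢ)` are bounded, then the lengths of each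
fixed edge form a bounded sequence. (Every edge lies in a triangle.) -/
theorem minimizing_sequence_bounded {T ι : Type*} [Fintype T]
    (edges : T → Fin 3 → ι)
    (hsurj : ∀ e : ι, ∃ (t : T) (k : Fin 3), edges t k = e)
    (L : ℕ → ι → ℝ) (hnn : ∀ n i, 0 ≤ L n i)
    (htri : ∀ (n : ℕ) (t : T), L n (edges t 0) ≤ L n (edges t 1) + L n (edges t 2)
      ∧ L n (edges t 1) ≤ L n (edges t 0) + L n (edges t 2)
      ∧ L n (edges t 2) ≤ L n (edges t 0) + L n (edges t 1))
    (C : ℝ)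
    (hA : ∀ n, ∑ t : T, (L n (edges t 0) * L n (edges t 1)
        + L n (edges t 1) * L n (edges t 2)
        + L n (edges t 2) * L n (edges t 0)) ≤ C) :
    ∀ e : ι, ∃ B : ℝ, ∀ n, L n e ≤ B := by
  intro e
  obtain ⟨t, k, hk⟩ := hsurj e
  refine ⟨Real.sqrt (max C 0), fun n => ?_⟩
  set a := L n (edges t 0) with ha
  set b := L n (edges t 1) with hb
  set c := L n (edges t 2) with hc
  have hA' : a * b + b * c + c * a ≤ C := by
    refine le_trans ?_ (hA n)
    apply Finset.single_le_sum (f := fun t => L n (edges t 0) * L n (edges t 1)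
        + L n (edges t 1) * L n (edges t 2) + L n (edges t 2) * L n (edges t 0))
      (fun s _ => ?_) (Finset.mem_univ t)
    have h0 := hnn n (edges s 0); have h1 := hnn n (edges s 1); have h2 := hnn n (edges s 2)
    positivity
  obtain ⟨h01, h02, h03⟩ := htri n t
  have h0 := hnn n (edges t 0); have h1 := hnn n (edges t 1); have h2 := hnn n (edges t 2)
  have hsq : L n e ^ 2 ≤ max C 0 := by
    refine le_trans ?_ (le_max_of_le_left hA')
    rw [← hk]
    fin_cases k
    · show a ^ 2 ≤ a * b + b * c + c * a; nlinarith
    · show b ^ 2 ≤ a * b + b * c + c * a; nlinarith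
    · show c ^ 2 ≤ a * b + b * c + c * a; nlinarith
  calc L n e = Real.sqrt ((L n e) ^ 2) := by
        rw [Real.sqrt_sq (hk ▸ hnn n e)]
    _ ≤ Real.sqrt (max C 0) := Real.sqrt_le_sqrt hsq
end

section
/- (Infimum over metrics equals infimum over quasi-metrics) Fix image lengths L_i ≥ 0 on the edges of a triangulated closed surface such that L_i = 0 whenever required for finiteness. For any simplicial quasi-metric l⁰ with E_S(f, l⁰) < ∞, the perturbed metrics lᵗ defined by lᵗ(e_i) = l⁰(e_i) + t for t > 0 are genuine simplicial metrics (positive, satisfying triangle inequalities), and E_S(f, lᵗ) → E_S(f, l⁰) as t → 0⁺. Consequently inf over simplicial metrics of E_S equals inf over simplicial quasi-metrics of E_S. -/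
/-- The simplicial energy of a map with image edge lengths `L` with respect to the edge
length assignment `l` (with the convention `0/0 = 0`, valid for finite-energy maps). -/
noncomputable def simpEnergy {T ι : Type*} [Fintype T] (edges : T → Fin 3 → ι)
    (L l : ι → ℝ) : ℝ :=
  (1 / 2) * ∑ t : T,
    (((L (edges t 0)) ^ 2 / (l (edges t 0)) ^ 2 + (L (edges t 1)) ^ 2 / (l (edges t 1)) ^ 2)
          * l (edges t 0) * l (edges t 1)
      + ((L (edges t 1)) ^ 2 / (l (edges t 1)) ^ 2 + (L (edges t 2)) ^ 2 / (l (edges t 2)) ^ 2)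
          * l (edges t 1) * l (edges t 2)
      + ((L (edges t 2)) ^ 2 / (l (edges t 2)) ^ 2 + (L (edges t 0)) ^ 2 / (l (edges t 0)) ^ 2)
          * l (edges t 2) * l (edges t 0))

/-- `l` satisfies the triangle inequality in every triangle of the triangulation. -/
def triIneq {T ι : Type*} (edges : T → Fin 3 → ι) (l : ι → ℝ) : Prop :=
  ∀ t : T, l (edges t 0) ≤ l (edges t 1) + l (edges t 2)
    ∧ l (edges t 1) ≤ l (edges t 0) + l (edges t 2)
    ∧ l (edges t 2) ≤ l (edges t 0) + l (edges t 1)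

lemma aux1 (L a b : ℝ) (ha : 0 ≤ a) (hA : a = 0 → L = 0) :
    Filter.Tendsto (fun t : ℝ => L ^ 2 * (b + t) / (a + t)) (nhdsWithin 0 (Set.Ioi 0))
      (nhds (L ^ 2 / a ^ 2 * a * b)) := by
  rcases eq_or_lt_of_le ha with h | h
  · have hL : L = 0 := hA h.symm
    simp [hL]
  · have hcont : ContinuousAt (fun t : ℝ => L ^ 2 * (b + t) / (a + t)) 0 :=
      ContinuousAt.div (by fun_prop) (by fun_prop) (by simpa using h.ne')
    have h2 := hcont.tendsto.mono_left (nhdsWithin_le_nhds (s := Set.Ioi 0))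
    have : L ^ 2 * (b + 0) / (a + 0) = L ^ 2 / a ^ 2 * a * b := by
      field_simp; ring
    rwa [this] at h2

lemma pairTendsto (L M a b : ℝ) (ha : 0 ≤ a) (hb : 0 ≤ b)
    (hA : a = 0 → L = 0) (hB : b = 0 → M = 0) :
    Filter.Tendsto (fun t : ℝ => (L ^ 2 / (a + t) ^ 2 + M ^ 2 / (b + t) ^ 2) * (a + t) * (b + t))
      (nhdsWithin 0 (Set.Ioi 0)) (nhds ((L ^ 2 / a ^ 2 + M ^ 2 / b ^ 2) * a * b)) := by
  have h1 := aux1 L a b ha hA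
  have h2 := aux1 M b a hb hB
  have hsum := h1.add h2
  have htarget : L ^ 2 / a ^ 2 * a * b + M ^ 2 / b ^ 2 * b * a
      = (L ^ 2 / a ^ 2 + M ^ 2 / b ^ 2) * a * b := by ring
  rw [htarget] at hsum
  refine hsum.congr' ?_
  filter_upwards [self_mem_nhdsWithin] with t ht
  have hat : a + t ≠ 0 := by have := Set.mem_Ioi.mp ht; positivity
  have hbt : b + t ≠ 0 := by have := Set.mem_Ioi.mp ht; positivity
  field_simp

lemma energyTendsto {T ι : Type*} [Fintype T] (edges : T → Fin 3 → ι)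
    (L : ι → ℝ) (l0 : ι → ℝ) (hl0 : ∀ i, 0 ≤ l0 i)
    (hfin : ∀ i, l0 i = 0 → L i = 0) :
    Filter.Tendsto (fun t : ℝ => simpEnergy edges L (fun i => l0 i + t))
      (nhdsWithin 0 (Set.Ioi 0)) (nhds (simpEnergy edges L l0)) := by
  simp only [simpEnergy]
  refine Filter.Tendsto.const_mul _ (tendsto_finset_sum _ fun t _ => ?_)
  exact ((pairTendsto (L (edges t 0)) (L (edges t 1)) (l0 (edges t 0)) (l0 (edges t 1))
      (hl0 _) (hl0 _) (hfin _) (hfin _)).add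
    (pairTendsto (L (edges t 1)) (L (edges t 2)) (l0 (edges t 1)) (l0 (edges t 2))
      (hl0 _) (hl0 _) (hfin _) (hfin _))).add
    (pairTendsto (L (edges t 2)) (L (edges t 0)) (l0 (edges t 2)) (l0 (edges t 0))
      (hl0 _) (hl0 _) (hfin _) (hfin _))

/-- For any finite-energy simplicial quasi-metric `l⁰`, the perturbations
`lᵗ = l⁰ + t` (`t > 0`) are genuine simplicial metrics, and `E_S(f, lᵗ) → E_S(f, l⁰)` as
`t → 0⁺`. Consequently the infimum of the simplicial energy over simplicial metrics
equals the infimum over finite-energy simplicial quasi-metrics. -/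
theorem inf_energy_metrics_eq_inf_quasimetrics {T ι : Type*} [Fintype T]
    (edges : T → Fin 3 → ι)
    (L : ι → ℝ) (hL : ∀ i, 0 ≤ L i)
    (l0 : ι → ℝ) (hl0 : ∀ i, 0 ≤ l0 i) (htri0 : triIneq edges l0)
    (hfin : ∀ i, l0 i = 0 → L i = 0) :
    (∀ t : ℝ, 0 < t → (∀ i, 0 < l0 i + t) ∧ triIneq edges (fun i => l0 i + t)) ∧
    Filter.Tendsto (fun t : ℝ => simpEnergy edges L (fun i => l0 i + t))
      (nhdsWithin 0 (Set.Ioi 0)) (nhds (simpEnergy edges L l0)) ∧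
    sInf {x : ℝ | ∃ l : ι → ℝ, (∀ i, 0 < l i) ∧ triIneq edges l
          ∧ x = simpEnergy edges L l}
      = sInf {x : ℝ | ∃ l : ι → ℝ, (∀ i, 0 ≤ l i) ∧ triIneq edges l
          ∧ (∀ i, l i = 0 → L i = 0) ∧ x = simpEnergy edges L l} := by
  have hmet : ∀ (l : ι → ℝ), (∀ i, 0 ≤ l i) → triIneq edges l → ∀ t : ℝ, 0 < t →
      (∀ i, 0 < l i + t) ∧ triIneq edges (fun i => l i + t) := by
    intro l hl htri t ht
    refine ⟨fun i => by have := hl i; linarith, fun tr => ?_⟩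
    obtain ⟨h1, h2, h3⟩ := htri tr
    exact ⟨by dsimp; linarith, by dsimp; linarith, by dsimp; linarith⟩
  refine ⟨fun t ht => hmet l0 hl0 htri0 t ht, energyTendsto edges L l0 hl0 hfin, ?_⟩
  set A := {x : ℝ | ∃ l : ι → ℝ, (∀ i, 0 < l i) ∧ triIneq edges l
      ∧ x = simpEnergy edges L l} with hA
  set B := {x : ℝ | ∃ l : ι → ℝ, (∀ i, 0 ≤ l i) ∧ triIneq edges l
      ∧ (∀ i, l i = 0 → L i = 0) ∧ x = simpEnergy edges L l} with hB
  have hsub : A ⊆ B := by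
    rintro x ⟨l, hl, htri, rfl⟩
    exact ⟨l, fun i => (hl i).le, htri, fun i hi => absurd hi (hl i).ne', rfl⟩
  have hBnn : ∀ x ∈ B, (0 : ℝ) ≤ x := by
    rintro x ⟨l, hl, -, -, rfl⟩
    unfold simpEnergy
    refine mul_nonneg (by norm_num) (Finset.sum_nonneg fun t _ => ?_)
    have h0 := hl (edges t 0); have h1 := hl (edges t 1); have h2 := hl (edges t 2)
    positivity
  have hBbdd : BddBelow B := ⟨0, hBnn⟩
  have hAbdd : BddBelow A := hBbdd.mono hsub
  have hAne : A.Nonempty :=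
    ⟨_, fun _ => 1, fun _ => one_pos, fun tr => by norm_num, rfl⟩
  have hBne : B.Nonempty := hAne.mono hsub
  refine le_antisymm (le_csInf hBne ?_) (csInf_le_csInf hBbdd hAne hsub)
  rintro x ⟨l, hl, htri, hf, rfl⟩
  have htd := energyTendsto edges L l hl hf
  refine ge_of_tendsto htd ?_
  filter_upwards [self_mem_nhdsWithin] with t ht
  exact csInf_le hAbdd
    ⟨fun i => l i + t, (hmet l hl htri t ht).1, (hmet l hl htri t ht).2, rfl⟩
end
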